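/- The sum of the coefficients a_{r_1,...,r_i} = \prod_{j=1}^{i} 1/(r_j + \cdots + r_i) over all compositions (r_1, ..., r_i) of n into positive integers (all i from 1 to n) equals 1 for every n \geq 1. (For n = 4: 1/4 + 1/12 + 1/4 + 1/8 + 1/24 + 1/12 + 1/8 + 1/24 = 1, corresponding to the compositions 4, 1+3, 3+1, 2+2, 1+1+2, 1+2+1, 2+1+1, 1+1+1+1.) -/

import Mathlib

open Finset

noncomputable def T (i n : ℕ) : ℚ :=
  ∑ r ∈ (Finset.Nat.antidiagonalTuple i n).filter (fun r => ∀ j, 0 < r j),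
    ∏ j, (((∑ j' ∈ Finset.Ici j, r j') : ℕ) : ℚ)⁻¹

lemma T_zero_of_lt {i m : ℕ} (h : m < i) : T i m = 0 := by
  unfold T
  rw [Finset.filter_eq_empty_iff.2, Finset.sum_empty]
  intro r hr hpos
  rw [Finset.Nat.mem_antidiagonalTuple] at hr
  have : i ≤ ∑ j, r j := by
    calc i = ∑ _j : Fin i, 1 := by simp
    _ ≤ ∑ j, r j := Finset.sum_le_sum fun j _ => hpos j
  omega

lemma Ici_succ_eq (i : ℕ) (j : Fin i) :
    Finset.Ici j.succ = (Finset.Ici j).image Fin.succ := by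
  ext k
  simp only [Finset.mem_Ici, Finset.mem_image]
  constructor
  · intro hk
    have hk0 : k ≠ 0 := by
      rintro rfl
      simp [Fin.le_def] at hk
    obtain ⟨m, rfl⟩ := Fin.exists_succ_eq_of_ne_zero hk0
    exact ⟨m, Fin.succ_le_succ_iff.mp hk, rfl⟩
  · rintro ⟨m, hm, rfl⟩
    exact Fin.succ_le_succ_iff.mpr hm

lemma sum_Ici_cons (i a : ℕ) (t : Fin i → ℕ) (j : Fin i) :
    ∑ j' ∈ Finset.Ici j.succ, Fin.cons a t j' = ∑ j' ∈ Finset.Ici j, t j' := by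
  rw [Ici_succ_eq, Finset.sum_image (fun _ _ _ _ h => Fin.succ_injective _ h)]
  simp

lemma sum_Ici_zero (i n : ℕ) (r : Fin (i+1) → ℕ)
    (hr : r ∈ Finset.Nat.antidiagonalTuple (i+1) n) :
    ∑ j' ∈ Finset.Ici (0 : Fin (i+1)), r j' = n := by
  rw [Finset.Nat.mem_antidiagonalTuple] at hr
  rw [← hr]
  congr 1
  ext k
  simp [Fin.zero_le]

lemma T_succ' (i n : ℕ) :
    T (i+1) n = ∑ x ∈ ((Finset.HasAntidiagonal.antidiagonal n).filter (fun p => 0 < p.1)).sigma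
        (fun p => (Finset.Nat.antidiagonalTuple i p.2).filter (fun r => ∀ j, 0 < r j)),
      (n : ℚ)⁻¹ * ∏ j, (((∑ j' ∈ Finset.Ici j, x.2 j') : ℕ) : ℚ)⁻¹ := by
  unfold T
  refine (Finset.sum_bij' (fun p _ => Fin.cons p.1.1 p.2)
    (fun r _ => ⟨(r 0, ∑ j, Fin.tail r j), Fin.tail r⟩) ?_ ?_ ?_ ?_ ?_).symm
  · rintro ⟨⟨a, b⟩, t⟩ hp
    simp only [Finset.mem_sigma, Finset.mem_filter, Finset.HasAntidiagonal.mem_antidiagonal,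
      Finset.Nat.mem_antidiagonalTuple] at hp ⊢
    obtain ⟨⟨hab, ha⟩, ht, hpos⟩ := hp
    refine ⟨by rw [Fin.sum_cons, ht]; exact hab, ?_⟩
    intro j
    refine Fin.cases ?_ ?_ j
    · simpa using ha
    · intro j'; simpa using hpos j'
  · intro r hr
    simp only [Finset.mem_filter, Finset.Nat.mem_antidiagonalTuple] at hr
    obtain ⟨hr, hpos⟩ := hr
    simp only [Finset.mem_sigma, Finset.mem_filter, Finset.HasAntidiagonal.mem_antidiagonal,
      Finset.Nat.mem_antidiagonalTuple]
    refine ⟨⟨?_, hpos 0⟩, trivial, fun j => hpos j.succ⟩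
    rw [← hr, Fin.sum_univ_succ]; rfl
  · rintro ⟨⟨a, b⟩, t⟩ hp
    simp only [Finset.mem_sigma, Finset.mem_filter, Finset.Nat.mem_antidiagonalTuple] at hp
    obtain ⟨_, ht, _⟩ := hp
    simp [Fin.tail_cons, Fin.cons_zero, ht]
  · intro r hr
    simp [Fin.cons_self_tail]
  · rintro ⟨⟨a, b⟩, t⟩ hp
    simp only [Finset.mem_sigma, Finset.mem_filter, Finset.HasAntidiagonal.mem_antidiagonal,
      Finset.Nat.mem_antidiagonalTuple] at hp
    obtain ⟨⟨hab, ha⟩, ht, hpos⟩ := hp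
    rw [Fin.prod_univ_succ]
    have h0 : ∑ j' ∈ Finset.Ici (0 : Fin (i+1)), Fin.cons a t j' = n := by
      apply sum_Ici_zero i n
      rw [Finset.Nat.mem_antidiagonalTuple, Fin.sum_cons, ht]; exact hab
    rw [h0]
    congr 1
    apply Finset.prod_congr rfl
    intro j _
    rw [sum_Ici_cons]

lemma T_succ (i n : ℕ) :
    T (i+1) n = ∑ p ∈ (Finset.HasAntidiagonal.antidiagonal n).filter (fun p => 0 < p.1),
      (n : ℚ)⁻¹ * T i p.2 := by
  rw [T_succ', Finset.sum_sigma]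
  refine Finset.sum_congr rfl fun p _ => ?_
  rw [T, Finset.mul_sum]

lemma T_one (n : ℕ) (hn : 1 ≤ n) : T 1 n = (n : ℚ)⁻¹ := by
  unfold T
  rw [Finset.Nat.antidiagonalTuple_one]
  rw [Finset.filter_singleton, if_pos (by intro j; fin_cases j <;> simpa using (show 0 < n by omega))]
  rw [Finset.sum_singleton, Fin.prod_univ_one]
  have h1 : Finset.Ici (0 : Fin 1) = {0} := by decide
  rw [h1]
  simp

lemma S_eq_one : ∀ n, 1 ≤ n → ∑ i ∈ Finset.Icc 1 n, T i n = 1 := by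
  intro n
  induction n using Nat.strong_induction_on with
  | _ n ih =>
  intro hn
  have h1 : Finset.Icc 1 n = insert 1 (Finset.Icc 2 n) := by
    ext k; simp; omega
  rw [h1, Finset.sum_insert (by simp), T_one n hn]
  have h2 : ∑ i ∈ Finset.Icc 2 n, T i n = ∑ k ∈ Finset.Icc 1 (n-1), T (k+1) n := by
    refine Finset.sum_bij' (fun i _ => i - 1) (fun k _ => k + 1) ?_ ?_ ?_ ?_ ?_ <;>
        intro a ha <;> simp only [Finset.mem_Icc] at ha ⊢
    · omega
    · omega
    · omega
    · omega
    · congr 1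
      omega
  rw [h2]
  simp_rw [T_succ]
  rw [Finset.sum_comm]
  have h3 : ∀ p ∈ (Finset.HasAntidiagonal.antidiagonal n).filter (fun p => 0 < p.1),
      ∑ k ∈ Finset.Icc 1 (n-1), (n : ℚ)⁻¹ * T k p.2
        = if 0 < p.2 then (n:ℚ)⁻¹ else 0 := by
    rintro ⟨a, b⟩ hp
    simp only [Finset.mem_filter, Finset.HasAntidiagonal.mem_antidiagonal] at hp
    obtain ⟨hab, ha⟩ := hp
    rw [← Finset.mul_sum]
    by_cases hb : 0 < b
    · rw [if_pos hb]
      have hsub : Finset.Icc 1 b ⊆ Finset.Icc 1 (n-1) := by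
        apply Finset.Icc_subset_Icc_right; omega
      rw [← Finset.sum_subset hsub (fun k hk hk' => ?_)]
      · rw [ih b (by omega) hb, mul_one]
      · simp only [Finset.mem_Icc] at hk hk'
        exact T_zero_of_lt (by omega)
    · rw [if_neg hb]
      have : b = 0 := by omega
      subst this
      rw [Finset.sum_eq_zero, mul_zero]
      intro k hk
      simp only [Finset.mem_Icc] at hk
      exact T_zero_of_lt (by omega)
  rw [Finset.sum_congr rfl h3, Finset.sum_filter]
  rw [Finset.Nat.sum_antidiagonal_eq_sum_range_succ_mk]
  have h4 : ∀ k ∈ Finset.range (n+1),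
      (if 0 < k then (if 0 < n - k then (n:ℚ)⁻¹ else 0) else 0)
        = if k ∈ Finset.Ioo 0 n then (n:ℚ)⁻¹ else 0 := by
    intro k hk
    simp only [Finset.mem_range] at hk
    simp only [Finset.mem_Ioo]
    by_cases h0 : 0 < k
    · by_cases h5 : k < n
      · rw [if_pos h0, if_pos (by omega), if_pos ⟨h0, h5⟩]
      · rw [if_pos h0, if_neg (by omega), if_neg (by omega)]
    · rw [if_neg h0, if_neg (by omega)]
  rw [Finset.sum_congr rfl h4, ← Finset.sum_filter]
  have h6 : (Finset.range (n+1)).filter (fun k => k ∈ Finset.Ioo 0 n)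
      = Finset.Ioo 0 n := by
    ext k; simp; omega
  rw [h6, Finset.sum_const, Nat.card_Ioo, nsmul_eq_mul]
  have hn0 : (n : ℚ) ≠ 0 := by positivity
  have hc : ((n - 0 - 1 : ℕ) : ℚ) = (n : ℚ) - 1 := by
    rw [Nat.sub_zero, Nat.cast_sub hn, Nat.cast_one]
  rw [hc]
  field_simp
  ring

theorem sum_composition_coefficients_eq_one (n : ℕ) (hn : 1 ≤ n) :
    ∑ i ∈ Finset.Icc 1 n,
      ∑ r ∈ (Finset.Nat.antidiagonalTuple i n).filter (fun r => ∀ j, 0 < r j),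
        ∏ j, (((∑ j' ∈ Finset.Ici j, r j') : ℕ) : ℚ)⁻¹ = 1 := by
  exact S_eq_one n hn
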